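/- For X, Y ∈ L^∞(P) on a nonatomic probability space, X second-order stochastically dominates Y if and only if AVaR_t(X) ≤ AVaR_t(Y) for all t ∈ [0,1], where AVaR_t(X) = (1/t)∫₀ᵗ VaR_s(X) ds for t ∈ (0,1] and AVaR₀(X) = VaR₀(X). -/

import Mathlib

open MeasureTheory ProbabilityTheory Filter Set

/-- `X` belongs to `L^∞(P)`: measurable and essentially bounded. -/
def MemLinf {Ω : Type*} [MeasurableSpace Ω] (P : Measure Ω) (X : Ω → ℝ) : Prop :=
  Measurable X ∧ ∃ C : ℝ, ∀ᵐ ω ∂P, |X ω| ≤ C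

/-- The upper quantile function `q_X(t) = inf {x : F_X(x) > t}` of `X` under `P`. -/
noncomputable def uq {Ω : Type*} [MeasurableSpace Ω] (P : Measure Ω)
    (X : Ω → ℝ) (t : ℝ) : ℝ :=
  sInf {x : ℝ | t < cdf (P.map X) x}

/-- `VaR_t(X) = −q_X(t)`. -/
noncomputable def VaR {Ω : Type*} [MeasurableSpace Ω] (P : Measure Ω)
    (X : Ω → ℝ) (t : ℝ) : ℝ :=
  - uq P X t

/-- `AVaR_t(X) = (1/t) ∫₀ᵗ VaR_s(X) ds` for `t ∈ (0,1]`, and `AVaR₀(X) = VaR₀(X)`. -/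
noncomputable def AVaR {Ω : Type*} [MeasurableSpace Ω] (P : Measure Ω)
    (X : Ω → ℝ) (t : ℝ) : ℝ :=
  if t = 0 then VaR P X 0 else (1 / t) * ∫ s in Ioc (0 : ℝ) t, VaR P X s

/-- `X` second-order stochastically dominates `Y`: `E[f(X)] ≥ E[f(Y)]` for every
increasing concave `f : ℝ → ℝ`. -/
def SSD {Ω : Type*} [MeasurableSpace Ω] (P : Measure Ω) (X Y : Ω → ℝ) : Prop :=
  ∀ f : ℝ → ℝ, Monotone f → ConcaveOn ℝ Set.univ f →
    ∫ ω, f (Y ω) ∂P ≤ ∫ ω, f (X ω) ∂P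

namespace Stmt18

/-! ### Supergradients of concave functions -/

noncomputable def sg (f : ℝ → ℝ) (x : ℝ) : ℝ :=
  sSup ((fun y => (f y - f x) / (y - x)) '' Ioi x)

lemma sg_set_nonempty (f : ℝ → ℝ) (x : ℝ) :
    ((fun y => (f y - f x) / (y - x)) '' Ioi x).Nonempty :=
  ⟨_, ⟨x + 1, by simp, rfl⟩⟩

lemma sg_bddAbove {f : ℝ → ℝ} (hc : ConcaveOn ℝ univ f) (x : ℝ) :
    BddAbove ((fun y => (f y - f x) / (y - x)) '' Ioi x) := by
  refine ⟨(f x - f (x - 1)) / (x - (x - 1)), ?_⟩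
  rintro _ ⟨y, hy, rfl⟩
  exact hc.slope_anti_adjacent (mem_univ _) (mem_univ _) (by linarith) hy

lemma le_sg {f : ℝ → ℝ} (hc : ConcaveOn ℝ univ f) {x y : ℝ} (hxy : x < y) :
    (f y - f x) / (y - x) ≤ sg f x :=
  le_csSup (sg_bddAbove hc x) ⟨y, hxy, rfl⟩

lemma sg_le {f : ℝ → ℝ} {x c : ℝ} (h : ∀ y, x < y → (f y - f x) / (y - x) ≤ c) :
    sg f x ≤ c :=
  csSup_le (sg_set_nonempty f x) (by rintro _ ⟨y, hy, rfl⟩; exact h y hy)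

lemma sg_nonneg {f : ℝ → ℝ} (hm : Monotone f) (hc : ConcaveOn ℝ univ f) (x : ℝ) :
    0 ≤ sg f x := by
  refine le_trans ?_ (le_sg hc (by linarith : x < x + 1))
  have h1 := hm (by linarith : x ≤ x + 1)
  exact div_nonneg (by linarith) (by linarith)

lemma sg_anti {f : ℝ → ℝ} (hc : ConcaveOn ℝ univ f) : Antitone (sg f) := by
  intro x₁ x₂ h
  rcases eq_or_lt_of_le h with rfl | h
  · exact le_rfl
  · refine sg_le fun y hy => ?_
    exact le_trans (hc.slope_anti_adjacent (mem_univ _) (mem_univ _) h hy) (le_sg hc h)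

lemma sg_support {f : ℝ → ℝ} (hc : ConcaveOn ℝ univ f) (x y : ℝ) :
    f y ≤ f x + sg f x * (y - x) := by
  rcases lt_trichotomy y x with h | rfl | h
  · have h1 : sg f x ≤ (f x - f y) / (x - y) := by
      refine sg_le fun z hz => ?_
      exact hc.slope_anti_adjacent (mem_univ _) (mem_univ _) h hz
    have h2 : sg f x * (x - y) ≤ f x - f y := by
      rwa [le_div_iff₀ (by linarith)] at h1
    have h3 : sg f x * (y - x) = -(sg f x * (x - y)) := by ring
    linarith
  · simp
  · have h1 : (f y - f x) / (y - x) ≤ sg f x := le_sg hc h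
    have h2 : f y - f x ≤ sg f x * (y - x) := by
      rwa [div_le_iff₀ (by linarith)] at h1
    linarith

lemma concaveOn_min_const (c : ℝ) : ConcaveOn ℝ univ (fun x => min x c) := by
  refine ⟨convex_univ, fun x _ y _ a b ha hb hab => ?_⟩
  simp only [smul_eq_mul]
  refine le_min ?_ ?_
  · exact add_le_add (mul_le_mul_of_nonneg_left (min_le_left _ _) ha)
      (mul_le_mul_of_nonneg_left (min_le_left _ _) hb)
  · calc a * min x c + b * min y c ≤ a * c + b * c :=
        add_le_add (mul_le_mul_of_nonneg_left (min_le_right _ _) ha)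
          (mul_le_mul_of_nonneg_left (min_le_right _ _) hb)
      _ = c := by rw [← add_mul, hab, one_mul]

/-! ### The upper quantile function -/

noncomputable def Q (μ : Measure ℝ) (t : ℝ) : ℝ := sInf {x : ℝ | t < cdf μ x}

variable {μ : Measure ℝ} [IsProbabilityMeasure μ] {C : ℝ}

lemma cdf_eq_zero (hsupp : μ {x | C < |x|} = 0) {x : ℝ} (hx : x < -C) : cdf μ x = 0 := by
  have h0 : μ (Iic x) = 0 := by
    refine measure_mono_null (fun y hy => ?_) hsupp
    have : y ≤ x := hy
    have : C < -y := by linarith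
    exact lt_of_lt_of_le this (neg_le_abs y)
  rw [cdf_eq_real, measureReal_def, h0]
  simp

lemma cdf_C (hC : 0 ≤ C) (hsupp : μ {x | C < |x|} = 0) : cdf μ C = 1 := by
  have h0 : μ (Ioi C) = 0 :=
    measure_mono_null (fun y hy => lt_of_lt_of_le hy (le_abs_self y)) hsupp
  have h1 : μ (Iic C) = 1 := by
    rw [← compl_Ioi, measure_compl measurableSet_Ioi (measure_ne_top μ _), h0, measure_univ,
      tsub_zero]
  rw [cdf_eq_real, measureReal_def, h1, ENNReal.toReal_one]

lemma bddBelow_S (hsupp : μ {x | C < |x|} = 0) {t : ℝ} (ht : 0 ≤ t) :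
    BddBelow {x : ℝ | t < cdf μ x} := by
  refine ⟨-C, fun x hx => le_of_not_gt fun h => ?_⟩
  rw [mem_setOf_eq, cdf_eq_zero hsupp h] at hx
  exact absurd (lt_of_le_of_lt ht hx) (lt_irrefl 0)

lemma nonempty_S (hC : 0 ≤ C) (hsupp : μ {x | C < |x|} = 0) {t : ℝ} (ht : t < 1) :
    {x : ℝ | t < cdf μ x}.Nonempty :=
  ⟨C, by rw [mem_setOf_eq, cdf_C hC hsupp]; exact ht⟩

lemma Q_le (hsupp : μ {x | C < |x|} = 0) {t x : ℝ} (ht : 0 ≤ t) (h : t < cdf μ x) :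
    Q μ t ≤ x :=
  csInf_le (bddBelow_S hsupp ht) h

lemma lt_cdf (hC : 0 ≤ C) (hsupp : μ {x | C < |x|} = 0) {t x : ℝ} (ht : 0 ≤ t) (ht1 : t < 1)
    (h : Q μ t < x) : t < cdf μ x := by
  obtain ⟨y, hy, hyx⟩ := (csInf_lt_iff (bddBelow_S hsupp ht) (nonempty_S hC hsupp ht1)).mp h
  exact lt_of_lt_of_le hy ((monotone_cdf μ) hyx.le)

lemma le_cdf (hC : 0 ≤ C) (hsupp : μ {x | C < |x|} = 0) {t x : ℝ} (ht : 0 ≤ t) (ht1 : t < 1)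
    (h : Q μ t ≤ x) : t ≤ cdf μ x := by
  by_contra hlt
  push_neg at hlt
  have hrc : Tendsto (cdf μ) (nhdsWithin x (Ioi x)) (nhds (cdf μ x)) :=
    ((cdf μ).right_continuous x).tendsto.mono_left (nhdsWithin_mono x Ioi_subset_Ici_self)
  have hev : ∀ᶠ y in nhdsWithin x (Ioi x), cdf μ y < t := hrc.eventually (eventually_lt_nhds hlt)
  obtain ⟨y, hy1, hy2⟩ := (hev.and self_mem_nhdsWithin).exists
  exact absurd (lt_cdf hC hsupp ht ht1 (lt_of_le_of_lt h hy2)) (not_lt.mpr hy1.le)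

lemma Q_of_one_le {t : ℝ} (ht : 1 ≤ t) : Q μ t = 0 := by
  have h : {x : ℝ | t < cdf μ x} = ∅ :=
    eq_empty_of_forall_notMem fun x hx => absurd hx (not_lt.mpr ((cdf_le_one μ x).trans ht))
  rw [Q, h, Real.sInf_empty]

lemma Q_of_neg {t : ℝ} (ht : t < 0) : Q μ t = 0 := by
  have h : {x : ℝ | t < cdf μ x} = univ :=
    eq_univ_of_forall fun x => lt_of_lt_of_le ht (cdf_nonneg μ x)
  rw [Q, h, Real.sInf_of_not_bddBelow]
  rintro ⟨b, hb⟩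
  have := hb (mem_univ (b - 1))
  linarith

lemma Q_monoOn (hC : 0 ≤ C) (hsupp : μ {x | C < |x|} = 0) : MonotoneOn (Q μ) (Ico 0 1) :=
  fun a ha b hb hab =>
    csInf_le_csInf (bddBelow_S hsupp ha.1) (nonempty_S hC hsupp hb.2)
      (fun x hx => lt_of_le_of_lt hab hx)

lemma neg_C_le_Q (hC : 0 ≤ C) (hsupp : μ {x | C < |x|} = 0) {t : ℝ} (ht : 0 ≤ t) (ht1 : t < 1) :
    -C ≤ Q μ t := by
  refine le_csInf (nonempty_S hC hsupp ht1) fun x hx => le_of_not_gt fun h => ?_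
  rw [mem_setOf_eq, cdf_eq_zero hsupp h] at hx
  exact absurd (lt_of_le_of_lt ht hx) (lt_irrefl 0)

lemma Q_le_C (hC : 0 ≤ C) (hsupp : μ {x | C < |x|} = 0) {t : ℝ} (ht : 0 ≤ t) (ht1 : t < 1) :
    Q μ t ≤ C :=
  Q_le hsupp ht (by rw [cdf_C hC hsupp]; exact ht1)

lemma abs_Q_le (hC : 0 ≤ C) (hsupp : μ {x | C < |x|} = 0) {t : ℝ} (ht : 0 ≤ t) (ht1 : t ≤ 1) :
    |Q μ t| ≤ C := by
  rcases eq_or_lt_of_le ht1 with rfl | h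
  · rw [Q_of_one_le le_rfl]
    simpa using hC
  · exact abs_le.mpr ⟨neg_C_le_Q hC hsupp ht h, Q_le_C hC hsupp ht h⟩

lemma measurable_Q (hC : 0 ≤ C) (hsupp : μ {x | C < |x|} = 0) : Measurable (Q μ) := by
  apply measurable_of_Iic
  intro x
  have huniv : Iio (0:ℝ) ∪ Ico 0 1 ∪ Ici 1 = univ := by
    ext t
    simp only [mem_union, mem_Iio, mem_Ico, mem_Ici, mem_univ, iff_true]
    rcases lt_or_ge t 0 with h | h
    · exact Or.inl (Or.inl h)
    · rcases lt_or_ge t 1 with h1 | h1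
      · exact Or.inl (Or.inr ⟨h, h1⟩)
      · exact Or.inr h1
  have hdec : Q μ ⁻¹' Iic x =
      Iio (0:ℝ) ∩ Q μ ⁻¹' Iic x ∪ Ico (0:ℝ) 1 ∩ Q μ ⁻¹' Iic x ∪ Ici (1:ℝ) ∩ Q μ ⁻¹' Iic x := by
    rw [← union_inter_distrib_right, ← union_inter_distrib_right, huniv, univ_inter]
  rw [hdec]
  refine MeasurableSet.union (MeasurableSet.union ?_ ?_) ?_
  · by_cases hx : (0:ℝ) ≤ x
    · have h : Iio (0:ℝ) ∩ Q μ ⁻¹' Iic x = Iio 0 :=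
        inter_eq_left.mpr fun t ht => by
          simp only [mem_preimage, mem_Iic, Q_of_neg (mem_Iio.mp ht)]; exact hx
      rw [h]; exact measurableSet_Iio
    · have h : Iio (0:ℝ) ∩ Q μ ⁻¹' Iic x = ∅ := by
        refine eq_empty_of_forall_notMem fun t ⟨ht, htx⟩ => hx ?_
        rw [mem_preimage, mem_Iic, Q_of_neg (mem_Iio.mp ht)] at htx
        exact htx
      rw [h]; exact MeasurableSet.empty
  · apply Set.OrdConnected.measurableSet
    constructor
    intro a ha b hb z hz
    refine ⟨⟨le_trans ha.1.1 hz.1, lt_of_le_of_lt hz.2 hb.1.2⟩, ?_⟩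
    have hzI : z ∈ Ico (0:ℝ) 1 := ⟨le_trans ha.1.1 hz.1, lt_of_le_of_lt hz.2 hb.1.2⟩
    exact le_trans (Q_monoOn hC hsupp hzI hb.1 hz.2) hb.2
  · by_cases hx : (0:ℝ) ≤ x
    · have h : Ici (1:ℝ) ∩ Q μ ⁻¹' Iic x = Ici 1 :=
        inter_eq_left.mpr fun t ht => by
          simp only [mem_preimage, mem_Iic, Q_of_one_le (mem_Ici.mp ht)]; exact hx
      rw [h]; exact measurableSet_Ici
    · have h : Ici (1:ℝ) ∩ Q μ ⁻¹' Iic x = ∅ := by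
        refine eq_empty_of_forall_notMem fun t ⟨ht, htx⟩ => hx ?_
        rw [mem_preimage, mem_Iic, Q_of_one_le (mem_Ici.mp ht)] at htx
        exact htx
      rw [h]; exact MeasurableSet.empty

lemma map_Q (hC : 0 ≤ C) (hsupp : μ {x | C < |x|} = 0) :
    (volume.restrict (Ioo (0:ℝ) 1)).map (Q μ) = μ := by
  have hmeas : Measurable (Q μ) := measurable_Q hC hsupp
  have hprob : IsProbabilityMeasure (volume.restrict (Ioo (0:ℝ) 1)) :=
    ⟨by rw [Measure.restrict_apply_univ, Real.volume_Ioo]; norm_num⟩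
  have : IsProbabilityMeasure ((volume.restrict (Ioo (0:ℝ) 1)).map (Q μ)) :=
    Measure.isProbabilityMeasure_map hmeas.aemeasurable
  refine Measure.ext_of_Iic _ _ fun x => ?_
  rw [Measure.map_apply hmeas measurableSet_Iic, Measure.restrict_apply (hmeas measurableSet_Iic),
    ← ofReal_cdf]
  apply le_antisymm
  · calc volume (Q μ ⁻¹' Iic x ∩ Ioo 0 1) ≤ volume (Ioc 0 (cdf μ x)) := by
          refine measure_mono fun t ht => ?_
          exact ⟨ht.2.1, le_cdf hC hsupp ht.2.1.le ht.2.2 ht.1⟩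
      _ = ENNReal.ofReal (cdf μ x) := by rw [Real.volume_Ioc, sub_zero]
  · calc ENNReal.ofReal (cdf μ x) = volume (Ioo 0 (cdf μ x)) := by
          rw [Real.volume_Ioo, sub_zero]
      _ ≤ volume (Q μ ⁻¹' Iic x ∩ Ioo 0 1) := by
          refine measure_mono fun t ht => ?_
          have ht1 : t < 1 := lt_of_lt_of_le ht.2 (cdf_le_one μ x)
          exact ⟨Q_le hsupp ht.1.le ht.2, ht.1, ht1⟩

lemma integral_rep {Ω : Type*} [MeasurableSpace Ω] (P : Measure Ω) [IsProbabilityMeasure P]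
    {Z : Ω → ℝ} (hZ : Measurable Z) {C : ℝ} (hC : 0 ≤ C)
    (hsupp : (P.map Z) {x | C < |x|} = 0) {f : ℝ → ℝ} (hf : Measurable f) :
    ∫ ω, f (Z ω) ∂P = ∫ t in Ioo (0:ℝ) 1, f (Q (P.map Z) t) := by
  have hPZ : IsProbabilityMeasure (P.map Z) := Measure.isProbabilityMeasure_map hZ.aemeasurable
  have h1 : ∫ ω, f (Z ω) ∂P = ∫ x, f x ∂(P.map Z) :=
    (integral_map hZ.aemeasurable hf.aestronglyMeasurable).symm
  have h3 : ∫ x, f x ∂((volume.restrict (Ioo (0:ℝ) 1)).map (Q (P.map Z))) =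
      ∫ t in Ioo (0:ℝ) 1, f (Q (P.map Z) t) :=
    integral_map (measurable_Q hC hsupp).aemeasurable hf.aestronglyMeasurable
  rw [map_Q hC hsupp] at h3
  rw [h1, h3]

lemma integrableOn_bdd {u : ℝ → ℝ} (hu : Measurable u) {S : Set ℝ} (hS : MeasurableSet S)
    (hS1 : S ⊆ Ioc (0:ℝ) 1) {K : ℝ} (hK : ∀ s ∈ Ioc (0:ℝ) 1, |u s| ≤ K) :
    IntegrableOn u S volume := by
  refine Measure.integrableOn_of_bounded (M := K) ?_ hu.aestronglyMeasurable ?_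
  · exact (lt_of_le_of_lt (measure_mono hS1)
      (by rw [Real.volume_Ioc]; exact ENNReal.ofReal_lt_top)).ne
  · exact (ae_restrict_mem hS).mono fun s hs => by
      simpa [Real.norm_eq_abs] using hK s (hS1 hs)

lemma second_order {g h : ℝ → ℝ} (hgm : Measurable g) (hhm : Measurable h)
    (hganti : AntitoneOn g (Ioo (0:ℝ) 1)) {M K : ℝ}
    (hg0 : ∀ s ∈ Ioo (0:ℝ) 1, 0 ≤ g s) (hgM : ∀ s ∈ Ioo (0:ℝ) 1, g s ≤ M)
    (hhK : ∀ s ∈ Ioo (0:ℝ) 1, |h s| ≤ K)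
    (hH : ∀ t ∈ Ioc (0:ℝ) 1, 0 ≤ ∫ s in Ioc (0:ℝ) t, h s) :
    0 ≤ ∫ s in Ioo (0:ℝ) 1, g s * h s := by
  haveI hfin1 : IsFiniteMeasure (volume.restrict (Ioo (0:ℝ) 1)) :=
    ⟨by rw [Measure.restrict_apply_univ, Real.volume_Ioo]; exact ENNReal.ofReal_lt_top⟩
  haveI hfin2 : IsFiniteMeasure (volume.restrict (Ioo (0:ℝ) M)) :=
    ⟨by rw [Measure.restrict_apply_univ, Real.volume_Ioo]; exact ENNReal.ofReal_lt_top⟩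
  set F : ℝ → ℝ → ℝ := fun s u => if u < g s then h s else 0 with hF
  have hFm : Measurable (Function.uncurry F) := by
    apply Measurable.ite
    · exact measurableSet_lt measurable_snd (hgm.comp measurable_fst)
    · exact hhm.comp measurable_fst
    · exact measurable_const
  have hFint : Integrable (Function.uncurry F)
      ((volume.restrict (Ioo (0:ℝ) 1)).prod (volume.restrict (Ioo (0:ℝ) M))) := by
    refine Integrable.mono' (integrable_const (max K 0)) hFm.aestronglyMeasurable ?_
    rw [Measure.prod_restrict]
    filter_upwards [ae_restrict_mem (measurableSet_Ioo.prod measurableSet_Ioo)] with p hp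
    obtain ⟨hp1, hp2⟩ := hp
    simp only [Function.uncurry, hF, Real.norm_eq_abs]
    split_ifs with hcond
    · exact le_max_of_le_left (hhK _ hp1)
    · simp only [abs_zero]; exact le_max_right _ _
  have key : ∀ u : ℝ, 0 ≤ ∫ s, F s u ∂(volume.restrict (Ioo (0:ℝ) 1)) := by
    intro u
    have hAm : MeasurableSet {s : ℝ | u < g s} := measurableSet_lt measurable_const hgm
    have e1 : ∫ s, F s u ∂(volume.restrict (Ioo (0:ℝ) 1)) =
        ∫ s in Ioo (0:ℝ) 1 ∩ {s | u < g s}, h s := by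
      rw [← setIntegral_indicator hAm]
      refine setIntegral_congr_fun measurableSet_Ioo fun s _ => ?_
      rw [Set.indicator_apply]
      simp only [mem_setOf_eq, hF]
    set T := sSup (insert (0:ℝ) (Ioo (0:ℝ) 1 ∩ {s | u < g s})) with hT
    have hbdd : BddAbove (insert (0:ℝ) (Ioo (0:ℝ) 1 ∩ {s | u < g s})) := by
      refine ⟨1, ?_⟩
      rintro z (rfl | ⟨hz, _⟩)
      · norm_num
      · exact hz.2.le
    have hT0 : 0 ≤ T := le_csSup hbdd (mem_insert _ _)
    have hT1 : T ≤ 1 := by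
      refine csSup_le (insert_nonempty _ _) ?_
      rintro z (rfl | ⟨hz, _⟩)
      · norm_num
      · exact hz.2.le
    have hsub1 : Ioo (0:ℝ) 1 ∩ {s | u < g s} ⊆ Ioc 0 T := by
      rintro z ⟨hz1, hz2⟩
      exact ⟨hz1.1, le_csSup hbdd (mem_insert_of_mem _ ⟨hz1, hz2⟩)⟩
    have hsub2 : Ioo (0:ℝ) T ⊆ Ioo (0:ℝ) 1 ∩ {s | u < g s} := by
      rintro z ⟨hz1, hz2⟩
      obtain ⟨a, ha, hza⟩ := exists_lt_of_lt_csSup (insert_nonempty _ _) hz2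
      rcases ha with rfl | ⟨ha1, ha2⟩
      · linarith
      · have hz01 : z ∈ Ioo (0:ℝ) 1 := ⟨hz1, hza.trans ha1.2⟩
        exact ⟨hz01, lt_of_lt_of_le ha2 (hganti hz01 ha1 hza.le)⟩
    have heq : (Ioo (0:ℝ) 1 ∩ {s | u < g s} : Set ℝ) =ᵐ[volume] Ioc (0:ℝ) T := by
      rw [MeasureTheory.ae_eq_set]
      constructor
      · rw [diff_eq_empty.mpr hsub1]; exact measure_empty
      · refine measure_mono_null (fun z hz => ?_) (by simp : volume ({T} : Set ℝ) = 0)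
        obtain ⟨hz1, hz2⟩ := hz
        simp only [mem_singleton_iff]
        by_contra hne
        exact hz2 (hsub2 ⟨hz1.1, lt_of_le_of_ne hz1.2 hne⟩)
    rw [e1, setIntegral_congr_set heq]
    rcases eq_or_lt_of_le hT0 with hT0' | hTpos
    · rw [← hT0']
      simp
    · exact hH T ⟨hTpos, hT1⟩
  have swap := integral_integral_swap hFint
  calc (0:ℝ) ≤ ∫ u, ∫ s, F s u ∂(volume.restrict (Ioo (0:ℝ) 1))
        ∂(volume.restrict (Ioo (0:ℝ) M)) := integral_nonneg fun u => key u
    _ = ∫ s, ∫ u, F s u ∂(volume.restrict (Ioo (0:ℝ) M))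
        ∂(volume.restrict (Ioo (0:ℝ) 1)) := swap.symm
    _ = ∫ s in Ioo (0:ℝ) 1, g s * h s := by
      refine setIntegral_congr_fun measurableSet_Ioo fun s hs => ?_
      have e2 : (fun u => F s u) = Set.indicator (Iio (g s)) (fun _ => h s) := by
        funext u
        rw [Set.indicator_apply]
        simp only [mem_Iio, hF]
      rw [e2, setIntegral_indicator measurableSet_Iio, Set.Ioo_inter_Iio,
        min_eq_right (hgM s hs), setIntegral_const, measureReal_def, Real.volume_Ioo, sub_zero,
        ENNReal.toReal_ofReal (hg0 s hs), smul_eq_mul, mul_comm]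

end Stmt18

/-- On a nonatomic probability space, `X ⪰₂ Y` if and only if
`AVaR_t(X) ≤ AVaR_t(Y)` for all `t ∈ [0,1]`. -/
theorem stmt18 {Ω : Type*} [MeasurableSpace Ω] (P : Measure Ω) [IsProbabilityMeasure P]
    (U : Ω → ℝ) (hU : Measurable U)
    (hUd : P.map U = volume.restrict (Ioo (0 : ℝ) 1))
    (X Y : Ω → ℝ) (hX : MemLinf P X) (hY : MemLinf P Y) :
    SSD P X Y ↔ ∀ t ∈ Icc (0 : ℝ) 1, AVaR P X t ≤ AVaR P Y t := by
  classical
  obtain ⟨hXm, CX, hCX⟩ := hX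
  obtain ⟨hYm, CY, hCY⟩ := hY
  set C : ℝ := max (max CX CY) 0 with hCdef
  have hC : 0 ≤ C := le_max_right _ _
  have habs : MeasurableSet {x : ℝ | C < |x|} :=
    measurableSet_lt measurable_const continuous_abs.measurable
  have hsupp : ∀ Z : Ω → ℝ, Measurable Z → (∀ᵐ ω ∂P, |Z ω| ≤ C) →
      (P.map Z) {x | C < |x|} = 0 := by
    intro Z hZ hb
    rw [Measure.map_apply hZ habs]
    have h0 : P {ω | ¬ |Z ω| ≤ C} = 0 := ae_iff.mp hb
    convert h0 using 2
    ext ω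
    simp [not_le]
  have hbX : ∀ᵐ ω ∂P, |X ω| ≤ C :=
    hCX.mono fun ω hω => hω.trans ((le_max_left CX CY).trans (le_max_left _ _))
  have hbY : ∀ᵐ ω ∂P, |Y ω| ≤ C :=
    hCY.mono fun ω hω => hω.trans ((le_max_right CX CY).trans (le_max_left _ _))
  have hsX := hsupp X hXm hbX
  have hsY := hsupp Y hYm hbY
  haveI hPX : IsProbabilityMeasure (P.map X) := Measure.isProbabilityMeasure_map hXm.aemeasurable
  haveI hPY : IsProbabilityMeasure (P.map Y) := Measure.isProbabilityMeasure_map hYm.aemeasurable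
  have eqX : uq P X = Stmt18.Q (P.map X) := rfl
  have eqY : uq P Y = Stmt18.Q (P.map Y) := rfl
  have hqXm : Measurable (Stmt18.Q (P.map X)) := Stmt18.measurable_Q hC hsX
  have hqYm : Measurable (Stmt18.Q (P.map Y)) := Stmt18.measurable_Q hC hsY
  have hIX : ∀ S : Set ℝ, MeasurableSet S → S ⊆ Ioc (0:ℝ) 1 →
      IntegrableOn (Stmt18.Q (P.map X)) S volume := fun S hS hS1 =>
    Stmt18.integrableOn_bdd hqXm hS hS1 fun s hs => Stmt18.abs_Q_le hC hsX hs.1.le hs.2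
  have hIY : ∀ S : Set ℝ, MeasurableSet S → S ⊆ Ioc (0:ℝ) 1 →
      IntegrableOn (Stmt18.Q (P.map Y)) S volume := fun S hS hS1 =>
    Stmt18.integrableOn_bdd hqYm hS hS1 fun s hs => Stmt18.abs_Q_le hC hsY hs.1.le hs.2
  have havar : ∀ (Z : Ω → ℝ) (t : ℝ), t ≠ 0 →
      AVaR P Z t = (1/t) * (- ∫ s in Ioc (0:ℝ) t, uq P Z s) := by
    intro Z t ht
    simp only [AVaR, if_neg ht, VaR, integral_neg]
  have hiff : ∀ t : ℝ, 0 < t →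
      (AVaR P X t ≤ AVaR P Y t ↔
        ∫ s in Ioc (0:ℝ) t, Stmt18.Q (P.map Y) s ≤ ∫ s in Ioc (0:ℝ) t, Stmt18.Q (P.map X) s) := by
    intro t ht
    rw [havar X t ht.ne', havar Y t ht.ne',
      mul_le_mul_iff_right₀ (by positivity : (0:ℝ) < 1/t), neg_le_neg_iff, eqX, eqY]
  constructor
  · -- forward direction
    intro hssd
    have main : ∀ t : ℝ, 0 < t → t ≤ 1 →
        ∫ s in Ioc (0:ℝ) t, Stmt18.Q (P.map Y) s ≤ ∫ s in Ioc (0:ℝ) t, Stmt18.Q (P.map X) s := by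
      intro t ht0 ht1
      rcases eq_or_lt_of_le ht1 with rfl | ht1'
      · -- t = 1 : use f = id
        have h1 := hssd id monotone_id (concaveOn_id convex_univ)
        rw [Stmt18.integral_rep P hXm hC hsX measurable_id,
            Stmt18.integral_rep P hYm hC hsY measurable_id] at h1
        rw [integral_Ioc_eq_integral_Ioo, integral_Ioc_eq_integral_Ioo]
        simpa using h1
      · -- t < 1 : use f = min · c with c = q_Y(t)
        set c : ℝ := Stmt18.Q (P.map Y) t with hc
        have hcabs : |c| ≤ C := Stmt18.abs_Q_le hC hsY ht0.le ht1
        have hmono : Monotone (fun x : ℝ => min x c) := monotone_id.min monotone_const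
        have hmeas : Measurable (fun x : ℝ => min x c) := hmono.measurable
        have h1 := hssd _ hmono (Stmt18.concaveOn_min_const c)
        rw [Stmt18.integral_rep P hXm hC hsX hmeas, Stmt18.integral_rep P hYm hC hsY hmeas] at h1
        have hsplit : Ioc (0:ℝ) t ∪ Ioo t 1 = Ioo 0 1 := Ioc_union_Ioo_eq_Ioo ht0.le ht1'
        have hdisj : Disjoint (Ioc (0:ℝ) t) (Ioo t 1) :=
          disjoint_left.mpr fun s hs1 hs2 => absurd hs1.2 (not_le.mpr hs2.1)
        have hminbX : ∀ s ∈ Ioc (0:ℝ) 1, |min (Stmt18.Q (P.map X) s) c| ≤ C := by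
          intro s hs
          have h2 := abs_le.mp (Stmt18.abs_Q_le hC hsX hs.1.le hs.2)
          have h3 := abs_le.mp hcabs
          exact abs_le.mpr ⟨le_min h2.1 h3.1, (min_le_left _ _).trans h2.2⟩
        have hminbY : ∀ s ∈ Ioc (0:ℝ) 1, |min (Stmt18.Q (P.map Y) s) c| ≤ C := by
          intro s hs
          have h2 := abs_le.mp (Stmt18.abs_Q_le hC hsY hs.1.le hs.2)
          have h3 := abs_le.mp hcabs
          exact abs_le.mpr ⟨le_min h2.1 h3.1, (min_le_left _ _).trans h2.2⟩
        have hIminX : ∀ S : Set ℝ, MeasurableSet S → S ⊆ Ioc (0:ℝ) 1 →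
            IntegrableOn (fun s => min (Stmt18.Q (P.map X) s) c) S volume := fun S hS hS1 =>
          Stmt18.integrableOn_bdd (hqXm.min measurable_const) hS hS1 hminbX
        have hIminY : ∀ S : Set ℝ, MeasurableSet S → S ⊆ Ioc (0:ℝ) 1 →
            IntegrableOn (fun s => min (Stmt18.Q (P.map Y) s) c) S volume := fun S hS hS1 =>
          Stmt18.integrableOn_bdd (hqYm.min measurable_const) hS hS1 hminbY
        have hsub1 : Ioc (0:ℝ) t ⊆ Ioc 0 1 := Ioc_subset_Ioc_right ht1
        have hsub2 : Ioo t 1 ⊆ Ioc (0:ℝ) 1 := fun s hs => ⟨ht0.trans hs.1, hs.2.le⟩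
        have hconst : IntegrableOn (fun _ : ℝ => c) (Ioo t 1) volume := by
          refine (integrableOn_const_iff).mpr (Or.inr ?_)
          rw [Real.volume_Ioo]; exact ENNReal.ofReal_lt_top
        have hIoo : (volume (Ioo t 1)).toReal = 1 - t := by
          rw [Real.volume_Ioo, ENNReal.toReal_ofReal (by linarith)]
        have eX : ∫ s in Ioo (0:ℝ) 1, min (Stmt18.Q (P.map X) s) c ≤
            (∫ s in Ioc (0:ℝ) t, Stmt18.Q (P.map X) s) + (1 - t) * c := by
          rw [← hsplit, setIntegral_union hdisj measurableSet_Ioo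
            (hIminX _ measurableSet_Ioc hsub1) (hIminX _ measurableSet_Ioo hsub2)]
          refine add_le_add ?_ ?_
          · exact setIntegral_mono_on (hIminX _ measurableSet_Ioc hsub1)
              (hIX _ measurableSet_Ioc hsub1) measurableSet_Ioc fun s _ => min_le_left _ _
          · calc ∫ s in Ioo t 1, min (Stmt18.Q (P.map X) s) c ≤ ∫ _ in Ioo t 1, c :=
                setIntegral_mono_on (hIminX _ measurableSet_Ioo hsub2) hconst
                  measurableSet_Ioo fun s _ => min_le_right _ _
              _ = (1 - t) * c := by rw [setIntegral_const, measureReal_def, hIoo, smul_eq_mul]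
        have eY : ∫ s in Ioo (0:ℝ) 1, min (Stmt18.Q (P.map Y) s) c =
            (∫ s in Ioc (0:ℝ) t, Stmt18.Q (P.map Y) s) + (1 - t) * c := by
          rw [← hsplit, setIntegral_union hdisj measurableSet_Ioo
            (hIminY _ measurableSet_Ioc hsub1) (hIminY _ measurableSet_Ioo hsub2)]
          congr 1
          · refine setIntegral_congr_fun measurableSet_Ioc fun s hs => ?_
            exact min_eq_left (Stmt18.Q_monoOn hC hsY ⟨hs.1.le, lt_of_le_of_lt hs.2 ht1'⟩
              ⟨ht0.le, ht1'⟩ hs.2)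
          · rw [setIntegral_congr_fun measurableSet_Ioo
              (fun s hs => min_eq_right (Stmt18.Q_monoOn hC hsY ⟨ht0.le, ht1'⟩
                ⟨(ht0.trans hs.1).le, hs.2⟩ hs.1.le)), setIntegral_const, measureReal_def, hIoo, smul_eq_mul]
        linarith
    intro t ht
    obtain ⟨ht0, ht1⟩ := ht
    rcases eq_or_lt_of_le ht0 with ht0' | ht0'
    · -- t = 0
      have e0 : ∀ Z : Ω → ℝ, AVaR P Z t = - uq P Z 0 := by
        intro Z
        simp [AVaR, ← ht0', VaR]
      rw [e0 X, e0 Y, neg_le_neg_iff, eqX, eqY]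
      refine le_csInf (Stmt18.nonempty_S hC hsX one_pos) fun x hx => ?_
      have hx' : 0 < cdf (P.map X) x := hx
      set τ : ℝ := min (cdf (P.map X) x) 1 / 2 with hτ
      have hmin : 0 < min (cdf (P.map X) x) 1 := lt_min hx' one_pos
      have hτ0 : 0 < τ := by rw [hτ]; linarith
      have hτ1 : τ < 1 := by
        have h2 : min (cdf (P.map X) x) 1 ≤ 1 := min_le_right _ _
        rw [hτ]; linarith
      have hτx : τ < cdf (P.map X) x := by
        have h2 : min (cdf (P.map X) x) 1 ≤ cdf (P.map X) x := min_le_left _ _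
        rw [hτ]; linarith
      have hvol : IntegrableOn (fun _ : ℝ => Stmt18.Q (P.map Y) 0) (Ioc 0 τ) volume := by
        refine (integrableOn_const_iff).mpr (Or.inr ?_)
        rw [Real.volume_Ioc]; exact ENNReal.ofReal_lt_top
      have hvolX : IntegrableOn (fun _ : ℝ => Stmt18.Q (P.map X) τ) (Ioc 0 τ) volume := by
        refine (integrableOn_const_iff).mpr (Or.inr ?_)
        rw [Real.volume_Ioc]; exact ENNReal.ofReal_lt_top
      have l1 : τ * Stmt18.Q (P.map Y) 0 ≤ ∫ s in Ioc (0:ℝ) τ, Stmt18.Q (P.map Y) s := by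
        have h2 := setIntegral_mono_on hvol
          (hIY _ measurableSet_Ioc (Ioc_subset_Ioc_right hτ1.le)) measurableSet_Ioc
          (fun s hs => Stmt18.Q_monoOn hC hsY ⟨le_rfl, one_pos⟩
            ⟨hs.1.le, lt_of_le_of_lt hs.2 hτ1⟩ hs.1.le)
        rwa [setIntegral_const, measureReal_def, Real.volume_Ioc, sub_zero, ENNReal.toReal_ofReal hτ0.le,
          smul_eq_mul] at h2
      have l2 : ∫ s in Ioc (0:ℝ) τ, Stmt18.Q (P.map X) s ≤ τ * Stmt18.Q (P.map X) τ := by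
        have h2 := setIntegral_mono_on
          (hIX _ measurableSet_Ioc (Ioc_subset_Ioc_right hτ1.le)) hvolX measurableSet_Ioc
          (fun s hs => Stmt18.Q_monoOn hC hsX ⟨hs.1.le, lt_of_le_of_lt hs.2 hτ1⟩
            ⟨hτ0.le, hτ1⟩ hs.2)
        rwa [setIntegral_const, measureReal_def, Real.volume_Ioc, sub_zero, ENNReal.toReal_ofReal hτ0.le,
          smul_eq_mul] at h2
      have l3 := main τ hτ0 hτ1.le
      have l4 : Stmt18.Q (P.map Y) 0 ≤ Stmt18.Q (P.map X) τ :=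
        le_of_mul_le_mul_left (by linarith) hτ0
      exact le_trans l4 (Stmt18.Q_le hsX hτ0.le hτx)
    · exact (hiff t ht0').mpr (main t ht0' ht1)
  · -- backward direction
    intro hA f hfm hfc
    have hint : ∀ t : ℝ, 0 < t → t ≤ 1 →
        ∫ s in Ioc (0:ℝ) t, Stmt18.Q (P.map Y) s ≤ ∫ s in Ioc (0:ℝ) t, Stmt18.Q (P.map X) s :=
      fun t ht0 ht1 => (hiff t ht0).mp (hA t ⟨ht0.le, ht1⟩)
    rw [Stmt18.integral_rep P hXm hC hsX hfm.measurable,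
        Stmt18.integral_rep P hYm hC hsY hfm.measurable]
    set qX : ℝ → ℝ := Stmt18.Q (P.map X) with hqX
    set qY : ℝ → ℝ := Stmt18.Q (P.map Y) with hqY
    set g : ℝ → ℝ := fun s => Stmt18.sg f (qX s) with hg
    set h : ℝ → ℝ := fun s => qX s - qY s with hh
    have hg0 : ∀ s, 0 ≤ g s := fun s => Stmt18.sg_nonneg hfm hfc _
    have hgM : ∀ s ∈ Ioo (0:ℝ) 1, g s ≤ Stmt18.sg f (-C) := fun s hs =>
      Stmt18.sg_anti hfc (abs_le.mp (Stmt18.abs_Q_le hC hsX hs.1.le hs.2.le)).1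
    have hganti : AntitoneOn g (Ioo (0:ℝ) 1) := fun a ha b hb hab =>
      Stmt18.sg_anti hfc (Stmt18.Q_monoOn hC hsX ⟨ha.1.le, ha.2⟩ ⟨(ha.1.trans_le hab).le, hb.2⟩ hab)
    have hgm : Measurable g := (Stmt18.sg_anti hfc).measurable.comp hqXm
    have hhm : Measurable h := hqXm.sub hqYm
    set Kf : ℝ := max |f C| |f (-C)| with hKf
    have hfb : ∀ q : ℝ, |q| ≤ C → |f q| ≤ Kf := by
      intro q hq
      obtain ⟨h1, h2⟩ := abs_le.mp hq
      refine abs_le.mpr ⟨?_, ?_⟩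
      · calc -Kf ≤ -|f (-C)| := neg_le_neg (le_max_right _ _)
          _ ≤ f (-C) := neg_abs_le _
          _ ≤ f q := hfm h1
      · calc f q ≤ f C := hfm h2
          _ ≤ |f C| := le_abs_self _
          _ ≤ Kf := le_max_left _ _
    have hintfX : IntegrableOn (fun s => f (qX s)) (Ioo (0:ℝ) 1) volume :=
      Stmt18.integrableOn_bdd (hfm.measurable.comp hqXm) measurableSet_Ioo Ioo_subset_Ioc_self
        fun s hs => hfb _ (Stmt18.abs_Q_le hC hsX hs.1.le hs.2)
    have hintfY : IntegrableOn (fun s => f (qY s)) (Ioo (0:ℝ) 1) volume :=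
      Stmt18.integrableOn_bdd (hfm.measurable.comp hqYm) measurableSet_Ioo Ioo_subset_Ioc_self
        fun s hs => hfb _ (Stmt18.abs_Q_le hC hsY hs.1.le hs.2)
    have hha : ∀ s : ℝ, 0 ≤ s → s ≤ 1 → |h s| ≤ 2 * C := by
      intro s hs0 hs1
      have h2 := abs_le.mp (Stmt18.abs_Q_le hC hsX hs0 hs1)
      have h3 := abs_le.mp (Stmt18.abs_Q_le hC hsY hs0 hs1)
      show |qX s - qY s| ≤ 2 * C
      rw [abs_le]
      constructor <;> [linarith; linarith]
    have hgh_bdd : ∀ s ∈ Ioc (0:ℝ) 1, |g s * h s| ≤ Stmt18.sg f (-C) * (2 * C) := by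
      intro s hs
      have hqa := abs_le.mp (Stmt18.abs_Q_le hC hsX hs.1.le hs.2)
      have hga : g s ≤ Stmt18.sg f (-C) := Stmt18.sg_anti hfc hqa.1
      rw [abs_mul, abs_of_nonneg (hg0 s)]
      exact mul_le_mul hga (hha s hs.1.le hs.2) (abs_nonneg _) (Stmt18.sg_nonneg hfm hfc _)
    have hintGH : IntegrableOn (fun s => g s * h s) (Ioo (0:ℝ) 1) volume :=
      Stmt18.integrableOn_bdd (hgm.mul hhm) measurableSet_Ioo Ioo_subset_Ioc_self hgh_bdd
    have hpt : ∀ s, f (qY s) ≤ f (qX s) - g s * h s := by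
      intro s
      have hsup := Stmt18.sg_support hfc (qX s) (qY s)
      have he : g s * h s = -(Stmt18.sg f (qX s) * (qY s - qX s)) := by
        show Stmt18.sg f (qX s) * (qX s - qY s) = _
        ring
      linarith
    have hso : 0 ≤ ∫ s in Ioo (0:ℝ) 1, g s * h s := by
      refine Stmt18.second_order hgm hhm hganti (M := Stmt18.sg f (-C)) (K := 2 * C)
        (fun s _ => hg0 s) hgM (fun s hs => hha s hs.1.le hs.2.le) ?_
      intro t ht
      have e2 : ∫ s in Ioc (0:ℝ) t, h s =
          (∫ s in Ioc (0:ℝ) t, qX s) - ∫ s in Ioc (0:ℝ) t, qY s :=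
        integral_sub (hIX _ measurableSet_Ioc (Ioc_subset_Ioc_right ht.2))
          (hIY _ measurableSet_Ioc (Ioc_subset_Ioc_right ht.2))
      rw [e2]
      exact sub_nonneg.mpr (hint t ht.1 ht.2)
    calc ∫ s in Ioo (0:ℝ) 1, f (qY s) ≤ ∫ s in Ioo (0:ℝ) 1, (f (qX s) - g s * h s) :=
        setIntegral_mono_on hintfY (hintfX.sub hintGH) measurableSet_Ioo fun s _ => hpt s
      _ = (∫ s in Ioo (0:ℝ) 1, f (qX s)) - ∫ s in Ioo (0:ℝ) 1, g s * h s :=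
        integral_sub hintfX hintGH
      _ ≤ ∫ s in Ioo (0:ℝ) 1, f (qX s) := by linarith
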